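/- Let κ be an uncountable regular cardinal such that the set of all binary sequences of length < κ has cardinality κ. If there exists an injection ι from κ into the binary sequences of length < κ with the property that for every x : κ → 2 there is an ordinal α < κ such that there is no β < κ with x↾α ⊆ ι(β), then the generalized Baire space ^κκ of κ and the generalized Cantor space ^κ2 of κ are homeomorphic. -/

import Mathlib

/-- A binary sequence, coded as a pair consisting of its length and its values
(values at or beyond the length are irrelevant junk, normalized to `0` by
`IsBSeq`). -/
abbrev BSeq : Type _ := Ordinal × (Ordinal → Fin 2)

/-- The length of a binary sequence. -/
def bLen (t : BSeq) : Ordinal := t.1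

/-- The values of a binary sequence. -/
def bVal (t : BSeq) : Ordinal → Fin 2 := t.2

/-- A pair codes a genuine binary sequence: all values at or beyond the length
are `0`. -/
def IsBSeq (t : BSeq) : Prop := ∀ β, bLen t ≤ β → bVal t β = 0

/-- `BExt t u` means `t ⊆ u`: the binary sequence `u` extends `t`. -/
def BExt (t u : BSeq) : Prop := bLen t ≤ bLen u ∧ ∀ β < bLen t, bVal u β = bVal t β

/-- `BExtFun t x` means `t ⊆ x`: the total function `x` extends the binary
sequence `t`. -/
def BExtFun (t : BSeq) (x : Ordinal → Fin 2) : Prop := ∀ β < bLen t, x β = bVal t β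

/-- `x↾γ`: the restriction of `x : κ → 2` to `γ`, as a binary sequence of
length `γ`. -/
noncomputable def bRestrict (x : Ordinal → Fin 2) (γ : Ordinal) : BSeq :=
  (γ, fun β => if β < γ then x β else 0)

/-- The lexicographic ordering on binary sequences. -/
def BLex (s t : BSeq) : Prop :=
  (BExt s t ∧ s ≠ t) ∨
    ∃ γ, γ < bLen s ∧ γ < bLen t ∧ (∀ β < γ, bVal s β = bVal t β) ∧ bVal s γ < bVal t γ

/-- The underlying set of the generalized Baire space of `o`: all functions
from `{α | α < o}` to `{α | α < o}`. -/
def GBaire (o : Ordinal) : Type _ := ↥(Set.Iio o) → ↥(Set.Iio o)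

/-- The underlying set of the generalized Cantor space of `o`: all functions
from `{α | α < o}` to `2`. -/
def GCantor (o : Ordinal) : Type _ := ↥(Set.Iio o) → Fin 2

/-- The topology of the generalized Baire space, generated by the basic open
sets `N_s = {x | x↾α = s↾α}` for `α < o`. -/
def baireTopology (o : Ordinal) : TopologicalSpace (GBaire o) :=
  TopologicalSpace.generateFrom
    {U : Set (GBaire o) | ∃ α : Ordinal, α < o ∧ ∃ s : GBaire o,
      U = {x : GBaire o | ∀ β : ↥(Set.Iio o), (β : Ordinal) < α → x β = s β}}

/-- The topology of the generalized Cantor space, generated by the basic open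
sets `N_s = {x | x↾α = s↾α}` for `α < o`. -/
def cantorTopology (o : Ordinal) : TopologicalSpace (GCantor o) :=
  TopologicalSpace.generateFrom
    {U : Set (GCantor o) | ∃ α : Ordinal, α < o ∧ ∃ s : GCantor o,
      U = {x : GCantor o | ∀ β : ↥(Set.Iio o), (β : Ordinal) < α → x β = s β}}

universe u

namespace Stmt12

open Cardinal Set Ordinal

/-- Supremum over a proper initial segment of ordinals is below `κ.ord` for
regular `κ`. -/
lemma iSup_Iio_lt_ord {κ : Cardinal.{u}} (hreg : κ.IsRegular) {lam : Ordinal.{u}}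
    (hlam : lam < κ.ord) (f : ↥(Set.Iio lam) → Ordinal.{u}) (hf : ∀ i, f i < κ.ord) :
    iSup f < κ.ord := by
  have heq : iSup f = iSup (f ∘ (@Ordinal.ToType.mk lam).symm) := by
    apply le_antisymm
    · exact Ordinal.iSup_le fun i => by
        simpa [Function.comp_def] using Ordinal.le_iSup (f ∘ (@Ordinal.ToType.mk lam).symm)
          ((@Ordinal.ToType.mk lam) i)
    · exact Ordinal.iSup_le fun i => Ordinal.le_iSup f _
  rw [heq]
  apply Ordinal.iSup_lt_ord _ (fun i => hf _)
  rw [Cardinal.mk_toType, hreg.cof_eq]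
  exact Cardinal.lt_ord.mp hlam

variable (κ : Cardinal.{u}) (ι : Ordinal.{u} → BSeq.{u, u})

/-- `t` has an extension in the range of `ι` (restricted to `κ`). -/
def hasExt (t : BSeq.{u, u}) : Prop := ∃ β < κ.ord, BExt t (ι β)

/-- The "wavefront": minimal binary sequences without an extension in the range
of `ι`. -/
def Wset : Set BSeq.{u, u} :=
  {t | IsBSeq t ∧ bLen t < κ.ord ∧ ¬ hasExt κ ι t ∧
    ∀ γ < bLen t, hasExt κ ι (bRestrict (bVal t) γ)}

/-- The sequences with an extension in the range of `ι`. -/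
def Tset : Set BSeq.{u, u} :=
  {t | IsBSeq t ∧ bLen t < κ.ord ∧ hasExt κ ι t}

/-- The length of the unique initial segment of `y` lying on the wavefront. -/
noncomputable def pLen (y : Ordinal.{u} → Fin 2) : Ordinal.{u} :=
  sInf {α | ¬ hasExt κ ι (bRestrict y α)}

/-- The unique initial segment of `y` lying on the wavefront. -/
noncomputable def pw (y : Ordinal.{u} → Fin 2) : BSeq.{u, u} := bRestrict y (pLen κ ι y)

@[simp] lemma bLen_bRestrict (y : Ordinal.{u} → Fin 2) (γ : Ordinal.{u}) :
    bLen (bRestrict y γ) = γ := rfl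

lemma isBSeq_bRestrict (y : Ordinal.{u} → Fin 2) (γ : Ordinal.{u}) :
    IsBSeq (bRestrict y γ) := by
  intro β hβ
  simp only [bRestrict, bVal]
  exact if_neg (not_lt.mpr hβ)

lemma bRestrict_congr {y y' : Ordinal.{u} → Fin 2} {γ : Ordinal.{u}}
    (h : ∀ β < γ, y β = y' β) : bRestrict y γ = bRestrict y' γ := by
  unfold bRestrict
  refine Prod.ext rfl ?_
  funext β
  by_cases hβ : β < γ
  · simp [hβ, h β hβ]
  · simp [hβ]

lemma bRestrict_bVal_restrict {y : Ordinal.{u} → Fin 2} {γ δ : Ordinal.{u}} (h : γ ≤ δ) :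
    bRestrict (bVal (bRestrict y δ)) γ = bRestrict y γ := by
  apply bRestrict_congr
  intro β hβ
  simp only [bRestrict, bVal]
  exact if_pos (lt_of_lt_of_le hβ h)

lemma eq_bRestrict_of_isBSeq {t : BSeq.{u, u}} (ht : IsBSeq t) :
    t = bRestrict (bVal t) (bLen t) := by
  unfold bRestrict
  refine Prod.ext rfl ?_
  funext β
  by_cases hβ : β < bLen t
  · simp only [bVal] at *
    rw [if_pos hβ]
  · simp only [bVal] at *
    rw [if_neg hβ]
    exact ht β (not_lt.mp hβ)

section UsesAv

variable {κ ι}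

lemma avNonempty (hav : ∀ x : Ordinal.{u} → Fin 2, ∃ α < κ.ord, ¬ hasExt κ ι (bRestrict x α)) (y : Ordinal.{u} → Fin 2) :
    {α | ¬ hasExt κ ι (bRestrict y α)}.Nonempty := by
  obtain ⟨α, -, hα⟩ := hav y
  exact ⟨α, hα⟩

lemma pLen_not_hasExt (hav : ∀ x : Ordinal.{u} → Fin 2, ∃ α < κ.ord, ¬ hasExt κ ι (bRestrict x α)) (y : Ordinal.{u} → Fin 2) :
    ¬ hasExt κ ι (bRestrict y (pLen κ ι y)) :=
  csInf_mem (avNonempty hav y)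

lemma pLen_lt (hav : ∀ x : Ordinal.{u} → Fin 2, ∃ α < κ.ord, ¬ hasExt κ ι (bRestrict x α)) (y : Ordinal.{u} → Fin 2) : pLen κ ι y < κ.ord := by
  obtain ⟨α, hα1, hα2⟩ := hav y
  exact lt_of_le_of_lt (csInf_le' hα2) hα1

lemma hasExt_bRestrict_zero (h0 : (0 : Ordinal.{u}) < κ.ord) (y : Ordinal.{u} → Fin 2) : hasExt κ ι (bRestrict y 0) := by
  refine ⟨0, h0, zero_le, ?_⟩
  intro β hβ
  simp only [bLen_bRestrict] at hβ
  exact absurd hβ (not_lt_of_ge zero_le)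

lemma pLen_pos (hav : ∀ x : Ordinal.{u} → Fin 2, ∃ α < κ.ord, ¬ hasExt κ ι (bRestrict x α))
    (h0 : (0 : Ordinal.{u}) < κ.ord) (y : Ordinal.{u} → Fin 2) : 0 < pLen κ ι y := by
  rcases eq_or_ne (pLen κ ι y) 0 with h | h
  · exfalso
    have hne := pLen_not_hasExt hav y
    rw [h] at hne
    exact hne (hasExt_bRestrict_zero h0 y)
  · exact pos_iff_ne_zero.mpr h

lemma hasExt_of_lt_pLen {y : Ordinal.{u} → Fin 2} {γ : Ordinal.{u}} (h : γ < pLen κ ι y) :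
    hasExt κ ι (bRestrict y γ) := by
  by_contra hc
  have hmem : γ ∈ {α | ¬ hasExt κ ι (bRestrict y α)} := hc
  exact absurd (csInf_le' hmem) (not_le.mpr h)

lemma pw_mem (hav : ∀ x : Ordinal.{u} → Fin 2, ∃ α < κ.ord, ¬ hasExt κ ι (bRestrict x α)) (y : Ordinal.{u} → Fin 2) : pw κ ι y ∈ Wset κ ι := by
  refine ⟨isBSeq_bRestrict _ _, ?_, ?_, ?_⟩
  · simpa [pw] using pLen_lt hav y
  · simpa [pw] using pLen_not_hasExt hav y
  · intro γ hγ
    simp only [pw, bLen_bRestrict] at hγ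
    rw [pw, bRestrict_bVal_restrict (le_of_lt hγ)]
    exact hasExt_of_lt_pLen hγ

lemma pw_prefixFun (y : Ordinal.{u} → Fin 2) : BExtFun (pw κ ι y) y := by
  intro β hβ
  simp only [pw, bLen_bRestrict] at hβ
  simp only [pw, bRestrict, bVal, if_pos hβ]

lemma eq_pw_of_mem (hav : ∀ x : Ordinal.{u} → Fin 2, ∃ α < κ.ord, ¬ hasExt κ ι (bRestrict x α))
    {y : Ordinal.{u} → Fin 2} {w : BSeq.{u, u}} (hw : w ∈ Wset κ ι)
    (hpre : BExtFun w y) : w = pw κ ι y := by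
  obtain ⟨hbs, hlt, hnoe, hres⟩ := hw
  have hl : w = bRestrict y (bLen w) := by
    conv_lhs => rw [eq_bRestrict_of_isBSeq hbs]
    apply bRestrict_congr
    intro β hβ
    exact (hpre β hβ).symm
  have hmem : bLen w ∈ {α | ¬ hasExt κ ι (bRestrict y α)} := by
    simp only [Set.mem_setOf_eq]
    rw [← hl]; exact hnoe
  have h1 : pLen κ ι y ≤ bLen w := csInf_le' hmem
  rcases lt_or_eq_of_le h1 with h2 | h2
  · exfalso
    have h3 := hres (pLen κ ι y) h2
    have h4 : bRestrict (bVal w) (pLen κ ι y) = bRestrict y (pLen κ ι y) := by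
      apply bRestrict_congr
      intro β hβ
      exact (hpre β (lt_trans hβ h2)).symm
    rw [h4] at h3
    exact pLen_not_hasExt hav y h3
  · rw [pw, h2]; exact hl


/-- The shift of `y` by `γ`. -/
def shiftf (y : Ordinal.{u} → Fin 2) (γ : Ordinal.{u}) : Ordinal.{u} → Fin 2 :=
  fun β => y (γ + β)

variable (κ ι) in
/-- The position of the `α`-th block boundary of `y`. -/
noncomputable def gam (y : Ordinal.{u} → Fin 2) (α : Ordinal.{u}) : Ordinal.{u} :=
  Ordinal.limitRecOn α 0 (fun _ IH => IH + pLen κ ι (shiftf y IH))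
    (fun o _ IH => ⨆ i : ↥(Set.Iio o), IH i.1 i.2)

@[simp] lemma gam_zero (y : Ordinal.{u} → Fin 2) : gam κ ι y 0 = 0 :=
  Ordinal.limitRecOn_zero _ _ _

lemma gam_succ (y : Ordinal.{u} → Fin 2) (α : Ordinal.{u}) :
    gam κ ι y (Order.succ α) = gam κ ι y α + pLen κ ι (shiftf y (gam κ ι y α)) :=
  Ordinal.limitRecOn_succ _ _ _ _

lemma gam_limit (y : Ordinal.{u} → Fin 2) {α : Ordinal.{u}} (h : Order.IsSuccLimit α) :
    gam κ ι y α = ⨆ i : ↥(Set.Iio α), gam κ ι y i.1 :=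
  Ordinal.limitRecOn_limit _ _ _ _ h

lemma gam_lt_gam (hav : ∀ x : Ordinal.{u} → Fin 2, ∃ α < κ.ord, ¬ hasExt κ ι (bRestrict x α))
    (h0 : (0 : Ordinal.{u}) < κ.ord) (y : Ordinal.{u} → Fin 2) :
    ∀ j i, i < j → gam κ ι y i < gam κ ι y j := by
  intro j
  induction j using Ordinal.induction with
  | _ j IH =>
    intro i hij
    rcases Ordinal.zero_or_succ_or_isSuccLimit j with rfl | ⟨k, rfl⟩ | hl
    · exact absurd hij (not_lt_of_ge zero_le)
    · rw [gam_succ]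
      rcases (Order.lt_succ_iff.mp hij).lt_or_eq with h | h
      · exact lt_of_lt_of_le (IH k (Order.lt_succ k) i h) le_self_add
      · rw [h]
        exact (lt_add_iff_pos_right _).mpr (pLen_pos hav h0 _)
    · have h1 : Order.succ i < j := hl.succ_lt hij
      have h2 : gam κ ι y i < gam κ ι y (Order.succ i) := by
        rw [gam_succ]
        exact (lt_add_iff_pos_right _).mpr (pLen_pos hav h0 _)
      refine lt_of_lt_of_le h2 ?_
      rw [gam_limit y hl]
      exact Ordinal.le_iSup (fun i : ↥(Set.Iio j) => gam κ ι y i.1) ⟨Order.succ i, h1⟩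

lemma gam_le_gam (hav : ∀ x : Ordinal.{u} → Fin 2, ∃ α < κ.ord, ¬ hasExt κ ι (bRestrict x α))
    (h0 : (0 : Ordinal.{u}) < κ.ord) (y : Ordinal.{u} → Fin 2) {i j : Ordinal.{u}}
    (h : i ≤ j) : gam κ ι y i ≤ gam κ ι y j := by
  rcases h.lt_or_eq with h | h
  · exact (gam_lt_gam hav h0 y j i h).le
  · rw [h]

lemma self_le_gam (hav : ∀ x : Ordinal.{u} → Fin 2, ∃ α < κ.ord, ¬ hasExt κ ι (bRestrict x α))
    (h0 : (0 : Ordinal.{u}) < κ.ord) (y : Ordinal.{u} → Fin 2) :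
    ∀ α, α ≤ gam κ ι y α := by
  intro α
  induction α using Ordinal.induction with
  | _ α IH =>
    rcases Ordinal.zero_or_succ_or_isSuccLimit α with rfl | ⟨k, rfl⟩ | hl
    · simp
    · rw [gam_succ]
      have h1 : k + 1 ≤ gam κ ι y k + pLen κ ι (shiftf y (gam κ ι y k)) :=
        add_le_add (IH k (Order.lt_succ k)) (Order.one_le_iff_pos.mpr (pLen_pos hav h0 _))
      rw [← Ordinal.add_one_eq_succ]; exact h1
    · apply le_of_forall_lt
      intro c hc
      have h1 : Order.succ c < α := hl.succ_lt hc
      calc c < Order.succ c := Order.lt_succ c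
        _ ≤ gam κ ι y (Order.succ c) := IH _ h1
        _ ≤ gam κ ι y α := gam_le_gam hav h0 y h1.le

lemma gam_lt_ord (hreg : κ.IsRegular)
    (hav : ∀ x : Ordinal.{u} → Fin 2, ∃ α < κ.ord, ¬ hasExt κ ι (bRestrict x α))
    (y : Ordinal.{u} → Fin 2) : ∀ α, α < κ.ord → gam κ ι y α < κ.ord := by
  intro α
  induction α using Ordinal.induction with
  | _ α IH =>
    intro hα
    rcases Ordinal.zero_or_succ_or_isSuccLimit α with rfl | ⟨k, rfl⟩ | hl
    · simpa using lt_of_le_of_lt (zero_le) hα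
    · rw [gam_succ]
      rw [Cardinal.lt_ord, Ordinal.card_add]
      exact Cardinal.add_lt_of_lt hreg.aleph0_le
        (Cardinal.lt_ord.mp (IH k (Order.lt_succ k) (lt_trans (Order.lt_succ k) hα)))
        (Cardinal.lt_ord.mp (pLen_lt hav _))
    · rw [gam_limit y hl]
      exact iSup_Iio_lt_ord hreg hα _ (fun i => IH i.1 i.2 (lt_trans i.2 hα))


lemma pw_shift_eq (hav : ∀ x : Ordinal.{u} → Fin 2, ∃ α < κ.ord, ¬ hasExt κ ι (bRestrict x α))
    {y y' : Ordinal.{u} → Fin 2} {g δ : Ordinal.{u}} (hagree : ∀ β < δ, y' β = y β)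
    (hle : g + pLen κ ι (shiftf y g) ≤ δ) :
    pw κ ι (shiftf y' g) = pw κ ι (shiftf y g) := by
  have hpre : BExtFun (pw κ ι (shiftf y g)) (shiftf y' g) := by
    intro j hj
    have hj' : j < pLen κ ι (shiftf y g) := by simpa [pw] using hj
    have hlt : g + j < δ := lt_of_lt_of_le (add_lt_add_right hj' g) hle
    have : shiftf y' g j = shiftf y g j := hagree (g + j) hlt
    rw [this]
    exact pw_prefixFun (shiftf y g) j hj
  exact (eq_pw_of_mem hav (pw_mem hav (shiftf y g)) hpre).symm

lemma gam_agree (hav : ∀ x : Ordinal.{u} → Fin 2, ∃ α < κ.ord, ¬ hasExt κ ι (bRestrict x α))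
    {y y' : Ordinal.{u} → Fin 2} {δ : Ordinal.{u}} (hagree : ∀ β < δ, y' β = y β) :
    ∀ α, gam κ ι y α ≤ δ → gam κ ι y' α = gam κ ι y α := by
  intro α
  induction α using Ordinal.induction with
  | _ α IH =>
    intro hδ
    rcases Ordinal.zero_or_succ_or_isSuccLimit α with rfl | ⟨k, rfl⟩ | hl
    · simp
    · rw [gam_succ] at hδ
      have hk : gam κ ι y k ≤ δ := le_trans le_self_add hδ
      have hIH := IH k (Order.lt_succ k) hk
      have hpl : pLen κ ι (shiftf y' (gam κ ι y k)) = pLen κ ι (shiftf y (gam κ ι y k)) := by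
        simpa [pw] using congrArg bLen (pw_shift_eq hav hagree hδ)
      rw [gam_succ y' k, gam_succ y k, hIH, hpl]
    · rw [gam_limit y hl] at hδ
      rw [gam_limit y' hl, gam_limit y hl]
      exact iSup_congr fun i =>
        IH i.1 i.2 (le_trans (Ordinal.le_iSup (fun i : ↥(Set.Iio α) => gam κ ι y i.1) i) hδ)

lemma blocks_agree (hav : ∀ x : Ordinal.{u} → Fin 2, ∃ α < κ.ord, ¬ hasExt κ ι (bRestrict x α))
    {y y' : Ordinal.{u} → Fin 2} {δ : Ordinal.{u}} (hagree : ∀ β < δ, y' β = y β)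
    {k : Ordinal.{u}} (h : gam κ ι y (Order.succ k) ≤ δ) :
    pw κ ι (shiftf y' (gam κ ι y' k)) = pw κ ι (shiftf y (gam κ ι y k)) := by
  rw [gam_succ] at h
  have hk : gam κ ι y k ≤ δ := le_trans le_self_add h
  rw [gam_agree hav hagree k hk]
  exact pw_shift_eq hav hagree h

lemma rev_agree (hav : ∀ x : Ordinal.{u} → Fin 2, ∃ α < κ.ord, ¬ hasExt κ ι (bRestrict x α))
    {y y' : Ordinal.{u} → Fin 2} :
    ∀ α, (∀ β < α, pw κ ι (shiftf y' (gam κ ι y' β)) = pw κ ι (shiftf y (gam κ ι y β))) →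
      gam κ ι y' α = gam κ ι y α ∧ ∀ β < gam κ ι y α, y' β = y β := by
  intro α
  induction α using Ordinal.induction with
  | _ α IH =>
    intro hb
    rcases Ordinal.zero_or_succ_or_isSuccLimit α with rfl | ⟨k, rfl⟩ | hl
    · refine ⟨by simp, ?_⟩
      intro β hβ
      rw [gam_zero] at hβ
      exact absurd hβ (not_lt_of_ge zero_le)
    · obtain ⟨hg, hvals⟩ := IH k (Order.lt_succ k)
        (fun β hβ => hb β (lt_trans hβ (Order.lt_succ k)))
      have hbk := hb k (Order.lt_succ k)
      have hplen : pLen κ ι (shiftf y' (gam κ ι y' k)) = pLen κ ι (shiftf y (gam κ ι y k)) := by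
        simpa [pw] using congrArg bLen hbk
      constructor
      · have hplen' := hplen
        rw [hg] at hplen'
        rw [gam_succ y' k, gam_succ y k, hg, hplen']
      · intro β hβ
        rw [gam_succ] at hβ
        rcases lt_or_ge β (gam κ ι y k) with hc | hc
        · exact hvals β hc
        · set g := gam κ ι y k with hgdef
          set w := pw κ ι (shiftf y g) with hwdef
          have hβ2 : β - g < pLen κ ι (shiftf y g) := (Ordinal.sub_lt_of_le hc).mpr hβ
          have hβ3 : g + (β - g) = β := Ordinal.add_sub_cancel_of_le hc
          have e1 : y β = bVal w (β - g) := by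
            have h5 := pw_prefixFun (shiftf y g) (β - g) (by simpa [hwdef, pw] using hβ2)
            simp only [shiftf] at h5
            rw [hβ3] at h5
            exact h5
          have e2 : y' β = bVal w (β - g) := by
            have h4 : BExtFun (pw κ ι (shiftf y' (gam κ ι y' k))) (shiftf y' (gam κ ι y' k)) :=
              pw_prefixFun _
            rw [hbk, hg] at h4
            have h5 := h4 (β - g) (by simpa [hwdef, pw] using hβ2)
            simp only [shiftf] at h5
            rw [hβ3] at h5
            exact h5
          rw [e1, e2]
    · have hIH : ∀ i (hi : i < α),
          gam κ ι y' i = gam κ ι y i ∧ ∀ β < gam κ ι y i, y' β = y β :=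
        fun i hi => IH i hi (fun β hβ => hb β (lt_trans hβ hi))
      constructor
      · rw [gam_limit y' hl, gam_limit y hl]
        exact iSup_congr fun i => (hIH i.1 i.2).1
      · intro β hβ
        rw [gam_limit y hl] at hβ
        have hbdd : BddAbove (Set.range (fun i : ↥(Set.Iio α) => gam κ ι y i.1)) :=
          Ordinal.bddAbove_iff_small.mpr (by
            have : Small.{u} ↥(Set.Iio α) := Ordinal.small_Iio α
            exact small_range _)
        have hne : Nonempty ↥(Set.Iio α) := ⟨⟨0, hl.pos⟩⟩
        obtain ⟨b, ⟨i, rfl⟩, hib⟩ := (lt_csSup_iff hbdd (Set.range_nonempty _)).mp hβ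
        exact (hIH i.1 i.2).2 β hib


lemma isRegular_lift {c : Cardinal.{u}} (h : c.IsRegular) :
    (Cardinal.lift.{u + 1} c).IsRegular := by
  constructor
  · exact Cardinal.aleph0_le_lift.mpr h.1
  · rw [← Cardinal.lift_ord, ← Ordinal.lift_cof]
    exact Cardinal.lift_le.mpr h.2

lemma exists_equiv (hreg : κ.IsRegular)
    (hsize : Cardinal.mk ↥{t : BSeq | IsBSeq t ∧ bLen t < κ.ord} = Cardinal.lift.{u + 1} κ)
    (hmem : ∀ α < κ.ord, IsBSeq (ι α) ∧ bLen (ι α) < κ.ord)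
    (hinj : Set.InjOn ι (Set.Iio κ.ord))
    (hav : ∀ x : Ordinal.{u} → Fin 2, ∃ α < κ.ord, ¬ hasExt κ ι (bRestrict x α)) :
    Nonempty (↥(Set.Iio κ.ord) ≃ ↥(Wset κ ι)) := by
  have hIio : Cardinal.mk ↥(Set.Iio κ.ord) = Cardinal.lift.{u + 1} κ := by
    rw [Ordinal.mk_Iio_ordinal, Cardinal.card_ord]
  have hWle : Cardinal.mk ↥(Wset κ ι) ≤ Cardinal.lift.{u + 1} κ := by
    rw [← hsize]
    exact Cardinal.mk_le_mk_of_subset (fun t ht => ⟨ht.1, ht.2.1⟩)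
  have hWge : Cardinal.lift.{u + 1} κ ≤ Cardinal.mk ↥(Wset κ ι) := by
    by_contra hcon
    push_neg at hcon
    have h1 : Cardinal.lift.{u + 1} κ ≤ Cardinal.mk ↥(Tset κ ι) := by
      rw [← hIio]
      apply Cardinal.mk_le_of_injective
        (f := fun b : ↥(Set.Iio κ.ord) =>
          (⟨ι b.1, (hmem b.1 b.2).1, (hmem b.1 b.2).2,
            ⟨b.1, b.2, le_refl _, fun _ _ => rfl⟩⟩ : ↥(Tset κ ι)))
      intro a b hab
      exact Subtype.ext (hinj a.2 b.2 (congrArg Subtype.val hab))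
    choose β hβ hext using fun t : ↥(Tset κ ι) => t.2.2.2
    have hkey : ∀ t : ↥(Tset κ ι), bLen (ι (β t)) < pLen κ ι (bVal (ι (β t))) := by
      intro t
      by_contra hle
      push_neg at hle
      apply pLen_not_hasExt hav (bVal (ι (β t)))
      refine ⟨β t, hβ t, by simpa using hle, ?_⟩
      intro j hj
      simp only [bRestrict, bVal, bLen] at *
      simp [hj]
    have hBExt : ∀ t : ↥(Tset κ ι), BExt t.1 (pw κ ι (bVal (ι (β t)))) ∧
        bLen t.1 < bLen (pw κ ι (bVal (ι (β t)))) := by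
      intro t
      have hlt : bLen t.1 < bLen (pw κ ι (bVal (ι (β t)))) := by
        simp only [pw, bLen_bRestrict]
        exact lt_of_le_of_lt (hext t).1 (hkey t)
      refine ⟨⟨hlt.le, ?_⟩, hlt⟩
      intro j hj
      have hj2 : j < pLen κ ι (bVal (ι (β t))) := by
        simpa [pw] using lt_of_lt_of_le hj hlt.le
      simp only [pw, bRestrict, bVal]
      simp only [show j < pLen κ ι (ι (β t)).2 from hj2, if_true]
      exact (hext t).2 j hj
    have hF2inj : Function.Injective
        (fun t : ↥(Tset κ ι) =>
          (⟨⟨pw κ ι (bVal (ι (β t))), pw_mem hav _⟩, ⟨bLen t.1, (hBExt t).2⟩⟩ :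
            Σ w : ↥(Wset κ ι), ↥(Set.Iio (bLen w.1)))) := by
      intro t t' heq
      have hw : pw κ ι (bVal (ι (β t))) = pw κ ι (bVal (ι (β t'))) :=
        congrArg (fun p : Σ w : ↥(Wset κ ι), ↥(Set.Iio (bLen w.1)) => p.1.1) heq
      have hlen : bLen t.1 = bLen t'.1 :=
        congrArg (fun p : Σ w : ↥(Wset κ ι), ↥(Set.Iio (bLen w.1)) => p.2.1) heq
      have ht : t.1 = bRestrict (bVal (pw κ ι (bVal (ι (β t))))) (bLen t.1) := by
        conv_lhs => rw [eq_bRestrict_of_isBSeq t.2.1]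
        exact bRestrict_congr (fun j hj => ((hBExt t).1.2 j hj).symm)
      have ht' : t'.1 = bRestrict (bVal (pw κ ι (bVal (ι (β t'))))) (bLen t'.1) := by
        conv_lhs => rw [eq_bRestrict_of_isBSeq t'.2.1]
        exact bRestrict_congr (fun j hj => ((hBExt t').1.2 j hj).symm)
      apply Subtype.ext
      rw [ht, ht', hw, hlen]
    have h2 : Cardinal.mk ↥(Tset κ ι) ≤
        Cardinal.sum (fun w : ↥(Wset κ ι) => Cardinal.lift.{u + 1} (bLen w.1).card) := by
      calc Cardinal.mk ↥(Tset κ ι)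
          ≤ Cardinal.mk (Σ w : ↥(Wset κ ι), ↥(Set.Iio (bLen w.1))) :=
            Cardinal.mk_le_of_injective hF2inj
        _ = Cardinal.sum (fun w : ↥(Wset κ ι) => Cardinal.mk ↥(Set.Iio (bLen w.1))) :=
            Cardinal.mk_sigma _
        _ = Cardinal.sum (fun w : ↥(Wset κ ι) => Cardinal.lift.{u + 1} (bLen w.1).card) := by
            simp [Ordinal.mk_Iio_ordinal]
    have h3 : Cardinal.sum (fun w : ↥(Wset κ ι) => Cardinal.lift.{u + 1} (bLen w.1).card) <
        Cardinal.lift.{u + 1} κ :=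
      Cardinal.sum_lt_of_isRegular (isRegular_lift hreg) hcon
        (fun w => Cardinal.lift_lt.mpr (Cardinal.lt_ord.mp w.2.2.1))
    exact absurd (le_trans h1 h2) (not_le.mpr h3)
  exact Cardinal.eq.mp (hIio.trans (le_antisymm hWle hWge).symm)


lemma Wset_len_pos (h0 : (0 : Ordinal.{u}) < κ.ord) {w : BSeq.{u, u}} (hw : w ∈ Wset κ ι) :
    0 < bLen w := by
  by_contra hz
  have hlen : bLen w = 0 := nonpos_iff_eq_zero.mp (not_lt.mp hz)
  apply hw.2.2.1
  refine ⟨0, h0, by rw [hlen]; exact zero_le, ?_⟩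
  intro j hj
  rw [hlen] at hj
  exact absurd hj (not_lt_of_ge zero_le)

variable (κ) in
/-- Generic block-boundary function from a block-length assignment. -/
noncomputable def gxF (ℓ : Ordinal.{u} → Ordinal.{u}) (α : Ordinal.{u}) : Ordinal.{u} :=
  Ordinal.limitRecOn α 0 (fun o IH => IH + ℓ o) (fun o _ IH => ⨆ i : ↥(Set.Iio o), IH i.1 i.2)

@[simp] lemma gxF_zero (ℓ : Ordinal.{u} → Ordinal.{u}) : gxF ℓ 0 = 0 :=
  Ordinal.limitRecOn_zero _ _ _

lemma gxF_succ (ℓ : Ordinal.{u} → Ordinal.{u}) (α : Ordinal.{u}) :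
    gxF ℓ (Order.succ α) = gxF ℓ α + ℓ α :=
  Ordinal.limitRecOn_succ _ _ _ _

lemma gxF_limit (ℓ : Ordinal.{u} → Ordinal.{u}) {α : Ordinal.{u}} (h : Order.IsSuccLimit α) :
    gxF ℓ α = ⨆ i : ↥(Set.Iio α), gxF ℓ i.1 :=
  Ordinal.limitRecOn_limit _ _ _ _ h

section GxF

variable {ℓ : Ordinal.{u} → Ordinal.{u}} (hpos : ∀ a, 0 < ℓ a)

include hpos

lemma gxF_lt_gxF : ∀ j i, i < j → gxF ℓ i < gxF ℓ j := by
  intro j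
  induction j using Ordinal.induction with
  | _ j IH =>
    intro i hij
    rcases Ordinal.zero_or_succ_or_isSuccLimit j with rfl | ⟨k, rfl⟩ | hl
    · exact absurd hij (not_lt_of_ge zero_le)
    · rw [gxF_succ]
      rcases (Order.lt_succ_iff.mp hij).lt_or_eq with h | h
      · exact lt_of_lt_of_le (IH k (Order.lt_succ k) i h) le_self_add
      · rw [h]
        exact (lt_add_iff_pos_right _).mpr (hpos k)
    · have h1 : Order.succ i < j := hl.succ_lt hij
      have h2 : gxF ℓ i < gxF ℓ (Order.succ i) := by
        rw [gxF_succ]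
        exact (lt_add_iff_pos_right _).mpr (hpos i)
      refine lt_of_lt_of_le h2 ?_
      rw [gxF_limit ℓ hl]
      exact Ordinal.le_iSup (fun i : ↥(Set.Iio j) => gxF ℓ i.1) ⟨Order.succ i, h1⟩

lemma gxF_le_gxF {i j : Ordinal.{u}} (h : i ≤ j) : gxF ℓ i ≤ gxF ℓ j := by
  rcases h.lt_or_eq with h | h
  · exact (gxF_lt_gxF hpos j i h).le
  · rw [h]

lemma self_le_gxF : ∀ α, α ≤ gxF ℓ α := by
  intro α
  induction α using Ordinal.induction with
  | _ α IH =>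
    rcases Ordinal.zero_or_succ_or_isSuccLimit α with rfl | ⟨k, rfl⟩ | hl
    · simp
    · rw [gxF_succ]
      have h1 : k + 1 ≤ gxF ℓ k + ℓ k :=
        add_le_add (IH k (Order.lt_succ k)) (Order.one_le_iff_pos.mpr (hpos k))
      rw [← Ordinal.add_one_eq_succ]; exact h1
    · apply le_of_forall_lt
      intro c hc
      have h1 : Order.succ c < α := hl.succ_lt hc
      calc c < Order.succ c := Order.lt_succ c
        _ ≤ gxF ℓ (Order.succ c) := IH _ h1
        _ ≤ gxF ℓ α := gxF_le_gxF hpos h1.le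

lemma gxF_lt_ord (hreg : κ.IsRegular) (hℓ : ∀ a, a < κ.ord → ℓ a < κ.ord) :
    ∀ α, α < κ.ord → gxF ℓ α < κ.ord := by
  intro α
  induction α using Ordinal.induction with
  | _ α IH =>
    intro hα
    rcases Ordinal.zero_or_succ_or_isSuccLimit α with rfl | ⟨k, rfl⟩ | hl
    · simpa using lt_of_le_of_lt (zero_le) hα
    · rw [gxF_succ]
      rw [Cardinal.lt_ord, Ordinal.card_add]
      have hk : k < κ.ord := lt_trans (Order.lt_succ k) hα
      exact Cardinal.add_lt_of_lt hreg.aleph0_le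
        (Cardinal.lt_ord.mp (IH k (Order.lt_succ k) hk))
        (Cardinal.lt_ord.mp (hℓ k hk))
    · rw [gxF_limit ℓ hl]
      exact iSup_Iio_lt_ord hreg hα _ (fun i => IH i.1 i.2 (lt_trans i.2 hα))

variable (ℓ) in
/-- The index of the block containing position `b`. -/
noncomputable def ixF (b : Ordinal.{u}) : Ordinal.{u} := sSup {a | gxF ℓ a ≤ b}

lemma ixF_bdd (b : Ordinal.{u}) : BddAbove {a | gxF ℓ a ≤ b} := by
  have hsub : {a | gxF ℓ a ≤ b} ⊆ Set.Iic b :=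
    fun a ha => le_trans (self_le_gxF hpos a) ha
  exact (bddAbove_Iic).mono hsub

lemma ixF_ne (b : Ordinal.{u}) : {a | gxF ℓ a ≤ b}.Nonempty :=
  ⟨0, by simp⟩

lemma gxF_ixF_le (b : Ordinal.{u}) : gxF ℓ (ixF ℓ b) ≤ b := by
  rcases Ordinal.zero_or_succ_or_isSuccLimit (ixF ℓ b) with h | ⟨k, hk⟩ | hl
  · rw [h]; simp
  · obtain ⟨s, hsS, hks⟩ := (lt_csSup_iff (ixF_bdd hpos b) (ixF_ne hpos b)).mp
      (show k < ixF ℓ b from hk ▸ Order.lt_succ k)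
    rw [← hk]
    exact le_trans (gxF_le_gxF hpos (Order.succ_le_of_lt hks)) hsS
  · rw [gxF_limit ℓ hl]
    apply Ordinal.iSup_le
    intro i
    obtain ⟨s, hsS, his⟩ := (lt_csSup_iff (ixF_bdd hpos b) (ixF_ne hpos b)).mp i.2
    exact le_trans (gxF_le_gxF hpos his.le) hsS

lemma lt_gxF_succ_ixF (b : Ordinal.{u}) : b < gxF ℓ (Order.succ (ixF ℓ b)) := by
  by_contra hcon
  push_neg at hcon
  have : Order.succ (ixF ℓ b) ≤ ixF ℓ b := le_csSup (ixF_bdd hpos b) hcon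
  exact absurd this (not_le.mpr (Order.lt_succ _))

lemma ixF_unique {a b : Ordinal.{u}} (h1 : gxF ℓ a ≤ b) (h2 : b < gxF ℓ (Order.succ a)) :
    a = ixF ℓ b := by
  have hle : a ≤ ixF ℓ b := le_csSup (ixF_bdd hpos b) h1
  rcases hle.lt_or_eq with h | h
  · exfalso
    have : gxF ℓ (Order.succ a) ≤ gxF ℓ (ixF ℓ b) := gxF_le_gxF hpos (Order.succ_le_of_lt h)
    exact absurd (le_trans this (gxF_ixF_le hpos b)) (not_le.mpr h2)
  · exact h

end GxF


variable (κ) in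
/-- Extend an element of the generalized Cantor space to all ordinals by `0`. -/
noncomputable def extC (z : GCantor κ.ord) : Ordinal.{u} → Fin 2 :=
  fun β => if h : β < κ.ord then z ⟨β, h⟩ else 0

/-- The homeomorphism from the generalized Cantor space to the generalized
Baire space: read off the successive wavefront blocks of `z`. -/
noncomputable def Fmap (hav : ∀ x : Ordinal.{u} → Fin 2, ∃ α < κ.ord, ¬ hasExt κ ι (bRestrict x α))
    (e : ↥(Set.Iio κ.ord) ≃ ↥(Wset κ ι)) (z : GCantor κ.ord) : GBaire κ.ord :=
  fun b => e.symm ⟨pw κ ι (shiftf (extC κ z) (gam κ ι (extC κ z) b.1)), pw_mem hav _⟩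

lemma Fmap_inj (hav : ∀ x : Ordinal.{u} → Fin 2, ∃ α < κ.ord, ¬ hasExt κ ι (bRestrict x α))
    (h0 : (0 : Ordinal.{u}) < κ.ord) (e : ↥(Set.Iio κ.ord) ≃ ↥(Wset κ ι)) :
    Function.Injective (Fmap hav e) := by
  intro z z' h
  have hb : ∀ b < κ.ord, pw κ ι (shiftf (extC κ z') (gam κ ι (extC κ z') b)) =
      pw κ ι (shiftf (extC κ z) (gam κ ι (extC κ z) b)) := by
    intro b hbκ
    have h1 := congrFun h ⟨b, hbκ⟩
    have h2 := e.symm.injective h1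
    exact (congrArg Subtype.val h2).symm
  obtain ⟨-, hvals⟩ := rev_agree hav κ.ord hb
  funext b
  have hb2 : b.1 < gam κ ι (extC κ z) κ.ord :=
    lt_of_lt_of_le b.2 (self_le_gam hav h0 _ κ.ord)
  have h3 := hvals b.1 hb2
  have hblt : (b : Ordinal.{u}) < κ.ord := b.2
  simp only [extC] at h3
  rw [dif_pos hblt, dif_pos hblt] at h3
  exact h3.symm

lemma Fmap_surj (hreg : κ.IsRegular)
    (hav : ∀ x : Ordinal.{u} → Fin 2, ∃ α < κ.ord, ¬ hasExt κ ι (bRestrict x α))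
    (h0 : (0 : Ordinal.{u}) < κ.ord) (e : ↥(Set.Iio κ.ord) ≃ ↥(Wset κ ι)) :
    Function.Surjective (Fmap hav e) := by
  have hlimord : Order.IsSuccLimit κ.ord := Cardinal.isSuccLimit_ord hreg.aleph0_le
  intro x
  -- the sequence of blocks prescribed by `x`
  set wfun : Ordinal.{u} → BSeq.{u, u} :=
    fun a => (e (if h : a < κ.ord then x ⟨a, h⟩ else ⟨0, h0⟩)).1 with hwfun
  have hwmem : ∀ a, wfun a ∈ Wset κ ι := fun a => (e _).2
  set ℓ : Ordinal.{u} → Ordinal.{u} := fun a => bLen (wfun a) with hℓ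
  have hpos : ∀ a, 0 < ℓ a := fun a => Wset_len_pos h0 (hwmem a)
  have hℓlt : ∀ a, a < κ.ord → ℓ a < κ.ord := fun a _ => (hwmem a).2.1
  -- the candidate preimage
  set zh : Ordinal.{u} → Fin 2 :=
    fun b => if h : b < κ.ord then bVal (wfun (ixF ℓ b)) (b - gxF ℓ (ixF ℓ b)) else 0 with hzh
  set z : GCantor κ.ord := fun b => zh b.1 with hz
  have hext : extC κ z = zh := by
    funext b
    by_cases hb : b < κ.ord
    · show (if h : b < κ.ord then z ⟨b, h⟩ else 0) = zh b
      rw [dif_pos hb]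
    · show (if h : b < κ.ord then z ⟨b, h⟩ else 0) = zh b
      rw [dif_neg hb]
      simp only [hzh]
      rw [dif_neg hb]
  -- the blocks of `zh` are exactly the prescribed blocks
  have hblock : ∀ k, k < κ.ord → pw κ ι (shiftf zh (gxF ℓ k)) = wfun k := by
    intro k hk
    have hsk : Order.succ k < κ.ord := hlimord.succ_lt hk
    have hgxk : gxF ℓ (Order.succ k) < κ.ord := gxF_lt_ord hpos hreg hℓlt _ hsk
    symm
    apply eq_pw_of_mem hav (hwmem k)
    intro j hj
    have hj' : j < ℓ k := hj
    have hlt2 : gxF ℓ k + j < gxF ℓ (Order.succ k) := by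
      rw [gxF_succ]
      exact add_lt_add_right hj' _
    have hltκ : gxF ℓ k + j < κ.ord := lt_trans hlt2 hgxk
    have hix : k = ixF ℓ (gxF ℓ k + j) :=
      ixF_unique hpos le_self_add hlt2
    show zh (gxF ℓ k + j) = bVal (wfun k) j
    rw [hzh]
    simp only [dif_pos hltκ]
    rw [← hix, Ordinal.add_sub_cancel]
  -- the block boundaries agree
  have hgam : ∀ α, α ≤ κ.ord → gam κ ι zh α = gxF ℓ α := by
    intro α
    induction α using Ordinal.induction with
    | _ α IH =>
      intro hα
      rcases Ordinal.zero_or_succ_or_isSuccLimit α with rfl | ⟨k, rfl⟩ | hl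
      · simp
      · have hk : k < κ.ord := lt_of_lt_of_le (Order.lt_succ k) hα
        have hIH := IH k (Order.lt_succ k) hk.le
        rw [gam_succ, gxF_succ, hIH]
        congr 1
        have := congrArg bLen (hblock k hk)
        simpa [pw] using this
      · rw [gam_limit zh hl, gxF_limit ℓ hl]
        exact iSup_congr fun i => IH i.1 i.2 (le_trans i.2.le hα)
  refine ⟨z, ?_⟩
  funext b
  show e.symm ⟨pw κ ι (shiftf (extC κ z) (gam κ ι (extC κ z) b.1)), _⟩ = x b
  have hb : b.1 < κ.ord := b.2
  have : pw κ ι (shiftf (extC κ z) (gam κ ι (extC κ z) b.1)) = wfun b.1 := by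
    rw [hext, hgam b.1 hb.le]
    exact hblock b.1 hb
  have hsub : (⟨pw κ ι (shiftf (extC κ z) (gam κ ι (extC κ z) b.1)), pw_mem hav _⟩ :
      ↥(Wset κ ι)) = e (x b) := by
    apply Subtype.ext
    show pw κ ι (shiftf (extC κ z) (gam κ ι (extC κ z) b.1)) = ((e (x b)) : BSeq)
    rw [this]
    simp only [hwfun]
    rw [dif_pos hb]
  rw [hsub, Equiv.symm_apply_apply]


lemma Fmap_continuous (hreg : κ.IsRegular)
    (hav : ∀ x : Ordinal.{u} → Fin 2, ∃ α < κ.ord, ¬ hasExt κ ι (bRestrict x α))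
    (h0 : (0 : Ordinal.{u}) < κ.ord) (e : ↥(Set.Iio κ.ord) ≃ ↥(Wset κ ι)) :
    @Continuous _ _ (cantorTopology κ.ord) (baireTopology κ.ord) (Fmap hav e) := by
  letI : TopologicalSpace (GCantor κ.ord) := cantorTopology κ.ord
  apply continuous_generateFrom_iff.mpr
  rintro U ⟨α, hα, sfun, rfl⟩
  set P : Set (GCantor κ.ord) := Fmap hav e ⁻¹'
    {x : GBaire κ.ord | ∀ β : ↥(Set.Iio κ.ord), (β : Ordinal) < α → x β = sfun β} with hP
  set B : GCantor κ.ord → Set (GCantor κ.ord) := fun z =>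
    {z' : GCantor κ.ord | ∀ β : ↥(Set.Iio κ.ord),
      (β : Ordinal) < gam κ ι (extC κ z) α → z' β = z β} with hB
  have hsub : ∀ z ∈ P, B z ⊆ P := by
    intro z hz z' hz'
    set y := extC κ z with hy
    set y' := extC κ z' with hy'
    have hgα : gam κ ι y α < κ.ord := gam_lt_ord hreg hav y α hα
    have hag : ∀ c < gam κ ι y α, y' c = y c := by
      intro c hc
      have hcκ : c < κ.ord := lt_trans hc hgα
      have := hz' ⟨c, hcκ⟩ hc
      show extC κ z' c = extC κ z c
      simp only [extC]
      rw [dif_pos hcκ, dif_pos hcκ]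
      exact this
    intro β hβ
    have hsucc : gam κ ι y (Order.succ β.1) ≤ gam κ ι y α :=
      gam_le_gam hav h0 y (Order.succ_le_of_lt hβ)
    have hblocks := blocks_agree hav hag hsucc
    have h5 : Fmap hav e z' β = Fmap hav e z β :=
      congrArg e.symm (Subtype.ext hblocks)
    rw [h5]
    exact hz β hβ
  have hPeq : P = ⋃ z ∈ P, B z := by
    ext z'
    constructor
    · intro hz'
      exact Set.mem_biUnion hz' (fun β _ => rfl)
    · intro hz'
      obtain ⟨z, hz, hz'B⟩ := Set.mem_iUnion₂.mp hz'
      exact hsub z hz hz'B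
  rw [hPeq]
  apply isOpen_biUnion
  intro z _
  exact TopologicalSpace.isOpen_generateFrom_of_mem
    ⟨gam κ ι (extC κ z) α, gam_lt_ord hreg hav (extC κ z) α hα, z, rfl⟩

lemma Fmap_open (hreg : κ.IsRegular)
    (hav : ∀ x : Ordinal.{u} → Fin 2, ∃ α < κ.ord, ¬ hasExt κ ι (bRestrict x α))
    (h0 : (0 : Ordinal.{u}) < κ.ord) (e : ↥(Set.Iio κ.ord) ≃ ↥(Wset κ ι))
    {α₀ : Ordinal.{u}} (hα₀ : α₀ < κ.ord) (z₀ : GCantor κ.ord) :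
    @IsOpen (GBaire κ.ord) (baireTopology κ.ord) (Fmap hav e ''
      {z' : GCantor κ.ord | ∀ β : ↥(Set.Iio κ.ord), (β : Ordinal) < α₀ → z' β = z₀ β}) := by
  letI : TopologicalSpace (GBaire κ.ord) := baireTopology κ.ord
  set V : Set (GCantor κ.ord) :=
    {z' : GCantor κ.ord | ∀ β : ↥(Set.Iio κ.ord), (β : Ordinal) < α₀ → z' β = z₀ β} with hV
  set Q : Set (GBaire κ.ord) := Fmap hav e '' V with hQ
  set B : GBaire κ.ord → Set (GBaire κ.ord) := fun x =>
    {x' : GBaire κ.ord | ∀ β : ↥(Set.Iio κ.ord), (β : Ordinal) < α₀ → x' β = x β} with hB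
  have hsub : ∀ x ∈ Q, B x ⊆ Q := by
    rintro x ⟨z, hzV, rfl⟩ x' hx'
    obtain ⟨z', rfl⟩ := Fmap_surj hreg hav h0 e x'
    refine ⟨z', ?_, rfl⟩
    set y := extC κ z with hy
    set y' := extC κ z' with hy'
    have hb : ∀ b < α₀, pw κ ι (shiftf y' (gam κ ι y' b)) = pw κ ι (shiftf y (gam κ ι y b)) := by
      intro b hbα
      have hbκ : b < κ.ord := lt_trans hbα hα₀
      have h1 := hx' ⟨b, hbκ⟩ hbα
      have h2 := e.symm.injective h1
      exact congrArg Subtype.val h2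
    obtain ⟨-, hvals⟩ := rev_agree hav α₀ hb
    intro β hβ
    have hβg : (β : Ordinal) < gam κ ι y α₀ :=
      lt_of_lt_of_le hβ (self_le_gam hav h0 y α₀)
    have h3 := hvals β.1 hβg
    have hblt : (β : Ordinal) < κ.ord := β.2
    simp only [hy, hy', extC] at h3
    rw [dif_pos hblt, dif_pos hblt] at h3
    rw [h3]
    exact hzV β hβ
  have hQeq : Q = ⋃ x ∈ Q, B x := by
    ext x'
    constructor
    · intro hx'
      exact Set.mem_biUnion hx' (fun β _ => rfl)
    · intro hx'
      obtain ⟨x, hx, hx'B⟩ := Set.mem_iUnion₂.mp hx'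
      exact hsub x hx hx'B
  rw [hQeq]
  apply isOpen_biUnion
  intro x _
  exact TopologicalSpace.isOpen_generateFrom_of_mem ⟨α₀, hα₀, x, rfl⟩

end UsesAv

end Stmt12

/-- Let `κ` be an uncountable regular cardinal such that the set
of all binary sequences of length `< κ` has cardinality `κ`.  If there is an
injection `ι` from `κ` into the binary sequences of length `< κ` such that for
every `x : κ → 2` there is `α < κ` such that no `β < κ` satisfies
`x↾α ⊆ ι(β)`, then the generalized Baire space `^κ κ` of `κ` and the
generalized Cantor space `^κ 2` of `κ` are homeomorphic. -/
theorem stmt12 (κ : Cardinal.{u}) (hreg : κ.IsRegular)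
    (hunc : Cardinal.aleph0 < κ)
    (hsize : Cardinal.mk ↥{t : BSeq | IsBSeq t ∧ bLen t < κ.ord} =
      Cardinal.lift.{u + 1} κ)
    (hex : ∃ ι : Ordinal → BSeq,
      (∀ α < κ.ord, IsBSeq (ι α) ∧ bLen (ι α) < κ.ord) ∧
      Set.InjOn ι (Set.Iio κ.ord) ∧
      ∀ x : Ordinal → Fin 2, ∃ α < κ.ord,
        ¬ ∃ β < κ.ord, BExt (bRestrict x α) (ι β)) :
    Nonempty (@Homeomorph (GBaire κ.ord) (GCantor κ.ord)
      (baireTopology κ.ord) (cantorTopology κ.ord)) := by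
  obtain ⟨ι, hmem, hinj, hav⟩ := hex
  have h0 : (0 : Ordinal.{u}) < κ.ord := (Cardinal.isSuccLimit_ord hreg.aleph0_le).pos
  have hav' : ∀ x : Ordinal.{u} → Fin 2, ∃ α < κ.ord,
      ¬ Stmt12.hasExt κ ι (bRestrict x α) := hav
  obtain ⟨e⟩ := Stmt12.exists_equiv hreg hsize hmem hinj hav'
  letI tC : TopologicalSpace (GCantor κ.ord) := cantorTopology κ.ord
  letI tB : TopologicalSpace (GBaire κ.ord) := baireTopology κ.ord
  set E : GCantor κ.ord ≃ GBaire κ.ord :=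
    Equiv.ofBijective (Stmt12.Fmap hav' e)
      ⟨Stmt12.Fmap_inj hav' h0 e, Stmt12.Fmap_surj hreg hav' h0 e⟩ with hE
  have hcont1 : Continuous E := Stmt12.Fmap_continuous hreg hav' h0 e
  have hcont2 : Continuous E.symm := by
    apply continuous_generateFrom_iff.mpr
    rintro V ⟨α₀, hα₀, z₀, rfl⟩
    have himg : E.symm ⁻¹'
        {z' : GCantor κ.ord | ∀ β : ↥(Set.Iio κ.ord), (β : Ordinal) < α₀ → z' β = z₀ β} =
        Stmt12.Fmap hav' e ''
        {z' : GCantor κ.ord | ∀ β : ↥(Set.Iio κ.ord), (β : Ordinal) < α₀ → z' β = z₀ β} :=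
      (Equiv.image_eq_preimage_symm E _).symm
    rw [himg]
    exact Stmt12.Fmap_open hreg hav' h0 e hα₀ z₀
  exact ⟨(Homeomorph.mk E hcont1 hcont2).symm⟩
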